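/- (Clausen's identity.) For all real a > 0, b > 0 and all real x with |x| < 1, ₂F₁(a, b; a+b+1/2; x)² = ₃F₂(2a, 2b, a+b; 2a+2b, a+b+1/2; x). -/
import Mathlib


/-- The Gauss hypergeometric series `₂F₁(a,b;c;x)`. -/
noncomputable def twoF1 (a b c x : ℝ) : ℝ :=
  ∑' n : ℕ, ((ascPochhammer ℝ n).eval a * (ascPochhammer ℝ n).eval b) /
    ((ascPochhammer ℝ n).eval c * (n.factorial : ℝ)) * x ^ n

/-- The generalized hypergeometric series `₃F₂(a₁,a₂,a₃;b₁,b₂;x)`. -/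
noncomputable def threeF2 (a₁ a₂ a₃ b₁ b₂ x : ℝ) : ℝ :=
  ∑' n : ℕ, ((ascPochhammer ℝ n).eval a₁ * (ascPochhammer ℝ n).eval a₂ *
      (ascPochhammer ℝ n).eval a₃) /
    ((ascPochhammer ℝ n).eval b₁ * (ascPochhammer ℝ n).eval b₂ * (n.factorial : ℝ)) * x ^ n

namespace Clausen

/-- The `n`-th coefficient of `₂F₁(a,b;a+b+1/2;x)`. -/
noncomputable def A (a b : ℝ) (m : ℕ) : ℝ :=
  ((ascPochhammer ℝ m).eval a * (ascPochhammer ℝ m).eval b) /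
    ((ascPochhammer ℝ m).eval (a + b + 1/2) * (m.factorial : ℝ))

/-- The `n`-th coefficient of the `₃F₂` side. -/
noncomputable def B (a b : ℝ) (n : ℕ) : ℝ :=
  ((ascPochhammer ℝ n).eval (2*a) * (ascPochhammer ℝ n).eval (2*b) *
      (ascPochhammer ℝ n).eval (a+b)) /
    ((ascPochhammer ℝ n).eval (2*a+2*b) * (ascPochhammer ℝ n).eval (a+b+1/2) *
      (n.factorial : ℝ))

/-- WZ-style certificate for Clausen's coefficient identity. -/
noncomputable def pp (a b n k : ℝ) : ℝ :=
  k * (1 - 3*k + 2*k^2 + 3/2*n - 3*n*k - a - b - 3*a*n - 3*b*n - 2*a^2 - 4*a*b - 2*b^2)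

lemma A_zero (a b : ℝ) : A a b 0 = 1 := by simp [A]

lemma A_pos {a b : ℝ} (ha : 0 < a) (hb : 0 < b) (m : ℕ) : 0 < A a b m := by
  have hc : (0:ℝ) < a + b + 1/2 := by linarith
  exact div_pos (mul_pos (ascPochhammer_pos m a ha) (ascPochhammer_pos m b hb))
    (mul_pos (ascPochhammer_pos m _ hc) (by exact_mod_cast m.factorial_pos))

lemma A_rec {a b : ℝ} (ha : 0 < a) (hb : 0 < b) (m : ℕ) :
    A a b (m+1) * (((m:ℝ)+1) * (a + b + 1/2 + m)) = A a b m * ((a+m)*(b+m)) := by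
  have hc : (0:ℝ) < a + b + 1/2 := by linarith
  have h1 : (ascPochhammer ℝ m).eval (a + b + 1/2) ≠ 0 := (ascPochhammer_pos m _ hc).ne'
  have h2 : ((m.factorial : ℝ)) ≠ 0 := by exact_mod_cast m.factorial_pos.ne'
  have h3 : (a + b + 1/2 + m) ≠ 0 := by positivity
  have h4 : ((m:ℝ)+1) ≠ 0 := by positivity
  have h5 : (ascPochhammer ℝ m).eval (a + b + 1/2) * (m.factorial : ℝ) ≠ 0 :=
    mul_ne_zero h1 h2
  have h6 : ((ascPochhammer ℝ m).eval (a + b + 1/2) * (a + b + 1/2 + m))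
      * ((((m:ℕ)+1 : ℕ) : ℝ) * (m.factorial : ℝ)) ≠ 0 := by
    push_cast
    exact mul_ne_zero (mul_ne_zero h1 h3) (mul_ne_zero h4 h2)
  simp only [A, ascPochhammer_succ_eval, Nat.factorial_succ]
  push_cast
  rw [div_mul_eq_mul_div, div_mul_eq_mul_div, div_eq_div_iff]
  · ring
  · push_cast at h6 ⊢; exact h6
  · exact h5

lemma B_zero (a b : ℝ) : B a b 0 = 1 := by simp [B]

lemma B_rec {a b : ℝ} (ha : 0 < a) (hb : 0 < b) (n : ℕ) :
    B a b (n+1) * (((n:ℝ)+1) * (a + b + 1/2 + n) * (2*a + 2*b + n))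
      = B a b n * ((2*a+n) * (2*b+n) * (a+b+n)) := by
  have hc : (0:ℝ) < a + b + 1/2 := by linarith
  have hs : (0:ℝ) < 2*a + 2*b := by linarith
  have h1 : (ascPochhammer ℝ n).eval (a + b + 1/2) ≠ 0 := (ascPochhammer_pos n _ hc).ne'
  have h1' : (ascPochhammer ℝ n).eval (2*a + 2*b) ≠ 0 := (ascPochhammer_pos n _ hs).ne'
  have h2 : ((n.factorial : ℝ)) ≠ 0 := by exact_mod_cast n.factorial_pos.ne'
  have h3 : (a + b + 1/2 + n) ≠ 0 := by positivity
  have h3' : (2*a + 2*b + n) ≠ 0 := by positivity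
  have h4 : ((n:ℝ)+1) ≠ 0 := by positivity
  have h5 : (ascPochhammer ℝ n).eval (2*a+2*b) * (ascPochhammer ℝ n).eval (a + b + 1/2)
      * (n.factorial : ℝ) ≠ 0 := mul_ne_zero (mul_ne_zero h1' h1) h2
  have h6 : ((ascPochhammer ℝ n).eval (2*a+2*b) * (2*a+2*b+n))
      * ((ascPochhammer ℝ n).eval (a + b + 1/2) * (a + b + 1/2 + n))
      * (((n:ℝ)+1) * (n.factorial : ℝ)) ≠ 0 :=
    mul_ne_zero (mul_ne_zero (mul_ne_zero h1' h3') (mul_ne_zero h1 h3))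
      (mul_ne_zero h4 h2)
  simp only [B, ascPochhammer_succ_eval, Nat.factorial_succ]
  push_cast
  rw [div_mul_eq_mul_div, div_mul_eq_mul_div, div_eq_div_iff]
  · ring
  · push_cast at h6 ⊢; exact h6
  · exact h5

/-- The key per-term (telescoping) identity. -/
lemma step {a b : ℝ} (ha : 0 < a) (hb : 0 < b) (k j : ℕ) :
    (((k:ℝ)+j+1) * (a + b + 1/2 + ((k:ℝ)+j)) * (2*a + 2*b + ((k:ℝ)+j)))
        * (A a b k * A a b (j+1))
      - ((2*a+((k:ℝ)+j)) * (2*b+((k:ℝ)+j)) * (a+b+((k:ℝ)+j)))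
        * (A a b k * A a b j)
    = pp a b ((k:ℝ)+j) ((k:ℝ)+1) * (A a b (k+1) * A a b j)
      - pp a b ((k:ℝ)+j) k * (A a b k * A a b (j+1)) := by
  have h1 := A_rec ha hb k
  have h2 := A_rec ha hb j
  have hD : ((((k:ℝ)+1) * (a + b + 1/2 + k)) * (((j:ℝ)+1) * (a + b + 1/2 + j))) ≠ 0 := by
    positivity
  apply mul_right_cancel₀ hD
  simp only [pp]
  linear_combination
    (((((k:ℝ)+j+1) * (a + b + 1/2 + ((k:ℝ)+j)) * (2*a + 2*b + ((k:ℝ)+j)))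
        + ((k:ℝ) * (1 - 3*(k:ℝ) + 2*(k:ℝ)^2 + 3/2*((k:ℝ)+j) - 3*((k:ℝ)+j)*(k:ℝ) - a - b
            - 3*a*((k:ℝ)+j) - 3*b*((k:ℝ)+j) - 2*a^2 - 4*a*b - 2*b^2)))
      * (A a b k) * (((k:ℝ)+1) * (a + b + 1/2 + k))) * h2
    - ((((k:ℝ)+1) * (1 - 3*((k:ℝ)+1) + 2*((k:ℝ)+1)^2 + 3/2*((k:ℝ)+j) - 3*((k:ℝ)+j)*((k:ℝ)+1)
          - a - b - 3*a*((k:ℝ)+j) - 3*b*((k:ℝ)+j) - 2*a^2 - 4*a*b - 2*b^2))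
        * (A a b j) * (((j:ℝ)+1) * (a + b + 1/2 + j))) * h1

/-- Clausen's coefficient identity: the Cauchy self-convolution of `A` equals `B`. -/
lemma conv {a b : ℝ} (ha : 0 < a) (hb : 0 < b) (n : ℕ) :
    ∑ k ∈ Finset.range (n+1), A a b k * A a b (n-k) = B a b n := by
  induction n with
  | zero => simp [A_zero, B_zero]
  | succ n ih =>
    set c : ℝ := a + b + 1/2 with hc
    have hL1 : (0:ℝ) < ((n:ℝ)+1) * (c + n) * (2*a + 2*b + n) := by
      have : (0:ℝ) ≤ (n:ℝ) := n.cast_nonneg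
      positivity
    -- the telescoping function
    set G : ℕ → ℝ := fun k => pp a b n k * (A a b k * A a b (n+1-k)) with hG
    have key : (((n:ℝ)+1) * (c + n) * (2*a + 2*b + n))
          * ∑ k ∈ Finset.range (n+2), A a b k * A a b (n+1-k)
        = ((2*a+(n:ℝ)) * (2*b+(n:ℝ)) * (a+b+(n:ℝ)))
          * ∑ k ∈ Finset.range (n+1), A a b k * A a b (n-k) := by
      rw [Finset.sum_range_succ, mul_add, Finset.mul_sum, Finset.mul_sum]
      have hterm : ∀ k ∈ Finset.range (n+1),
          (((n:ℝ)+1) * (c + n) * (2*a + 2*b + n)) * (A a b k * A a b (n+1-k))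
          = ((2*a+(n:ℝ)) * (2*b+(n:ℝ)) * (a+b+(n:ℝ))) * (A a b k * A a b (n-k))
            + (G (k+1) - G k) := by
        intro k hk
        have hkn : k ≤ n := by
          have := Finset.mem_range.mp hk; omega
        have hcast : ((k:ℝ) + ((n-k : ℕ):ℝ)) = (n:ℝ) := by
          rw [Nat.cast_sub hkn]; ring
        have hstep := step ha hb k (n-k)
        rw [hcast] at hstep
        have e1 : n + 1 - k = (n-k) + 1 := by omega
        have e2 : n + 1 - (k+1) = n - k := by omega
        have e3 : ((k:ℝ)+1) = ((k+1 : ℕ) : ℝ) := by push_cast; ring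
        rw [e3] at hstep
        rw [hG]
        simp only [e1, e2, e3]
        rw [← hc] at hstep
        linarith [hstep]
      rw [Finset.sum_congr rfl hterm, Finset.sum_add_distrib,
        Finset.sum_range_sub (fun k => G k) (n+1), Nat.sub_self]
      have hG0 : G 0 = 0 := by simp [hG, pp]
      have hGn : G (n+1) = -((((n:ℝ)+1) * (c + n) * (2*a + 2*b + n))) * A a b (n+1) := by
        have e : n + 1 - (n+1) = 0 := Nat.sub_self _
        simp only [hG, e, A_zero, pp, hc, mul_one]
        push_cast
        ring
      rw [hG0, hGn, A_zero]
      ring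
    have hBr := B_rec ha hb n
    rw [ih] at key
    rw [← hc] at hBr
    have : (((n:ℝ)+1) * (c + n) * (2*a + 2*b + n))
        * ∑ k ∈ Finset.range (n+2), A a b k * A a b (n+1-k)
        = (((n:ℝ)+1) * (c + n) * (2*a + 2*b + n)) * B a b (n+1) := by
      rw [key]; linear_combination -hBr
    exact mul_left_cancel₀ hL1.ne' this

lemma summable_norm {a b x : ℝ} (ha : 0 < a) (hb : 0 < b) (hx : |x| < 1) :
    Summable fun n : ℕ => ‖A a b n * x ^ n‖ := by
  apply summable_of_ratio_norm_eventually_le hx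
  filter_upwards [Filter.eventually_ge_atTop ⌈a*b⌉₊] with n hn
  have hab : a * b ≤ (n:ℝ) := le_trans (Nat.le_ceil _) (by exact_mod_cast hn)
  have hA1 : A a b (n+1) ≤ A a b n := by
    have hrec := A_rec ha hb n
    have hnn : (0:ℝ) ≤ (n:ℝ) := n.cast_nonneg
    have hDpos : (0:ℝ) < ((n:ℝ)+1) * (a + b + 1/2 + n) := by positivity
    have hineq : (a+(n:ℝ))*(b+(n:ℝ)) ≤ ((n:ℝ)+1) * (a + b + 1/2 + n) := by nlinarith
    have hApos := A_pos ha hb n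
    have : A a b (n+1) * (((n:ℝ)+1) * (a + b + 1/2 + n))
        ≤ A a b n * (((n:ℝ)+1) * (a + b + 1/2 + n)) := by
      rw [hrec]
      exact mul_le_mul_of_nonneg_left hineq hApos.le
    exact le_of_mul_le_mul_right this hDpos
  have hApos := A_pos ha hb n
  have hApos1 := A_pos ha hb (n+1)
  simp only [Real.norm_eq_abs, abs_abs, abs_mul, abs_pow]
  rw [abs_of_pos hApos, abs_of_pos hApos1, pow_succ]
  calc A a b (n+1) * (|x|^n * |x|) ≤ A a b n * (|x|^n * |x|) := by
        apply mul_le_mul_of_nonneg_right hA1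
        positivity
    _ = |x| * (A a b n * |x|^n) := by ring

end Clausen

/-- **Clausen's identity.**
`₂F₁(a,b;a+b+1/2;x)² = ₃F₂(2a,2b,a+b;2a+2b,a+b+1/2;x)` for `a, b > 0`, `|x| < 1`. -/
theorem clausen_identity (a b x : ℝ) (ha : 0 < a) (hb : 0 < b) (hx : |x| < 1) :
    (twoF1 a b (a + b + 1/2) x) ^ 2
      = threeF2 (2 * a) (2 * b) (a + b) (2 * a + 2 * b) (a + b + 1/2) x := by
  have hf := Clausen.summable_norm ha hb hx
  have h2F1 : twoF1 a b (a + b + 1/2) x = ∑' n : ℕ, Clausen.A a b n * x ^ n := rfl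
  rw [pow_two, h2F1,
    tsum_mul_tsum_eq_tsum_sum_range_of_summable_norm hf hf]
  rw [threeF2]
  apply tsum_congr
  intro n
  have hinner : ∑ k ∈ Finset.range (n+1),
      (Clausen.A a b k * x ^ k) * (Clausen.A a b (n-k) * x ^ (n-k))
      = (∑ k ∈ Finset.range (n+1), Clausen.A a b k * Clausen.A a b (n-k)) * x ^ n := by
    rw [Finset.sum_mul]
    apply Finset.sum_congr rfl
    intro k hk
    have hkn : k ≤ n := by have := Finset.mem_range.mp hk; omega
    have : x ^ k * x ^ (n-k) = x ^ n := by
      rw [← pow_add, Nat.add_sub_cancel' hkn]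
    calc (Clausen.A a b k * x ^ k) * (Clausen.A a b (n-k) * x ^ (n-k))
        = Clausen.A a b k * Clausen.A a b (n-k) * (x ^ k * x ^ (n-k)) := by ring
      _ = Clausen.A a b k * Clausen.A a b (n-k) * x ^ n := by rw [this]
  rw [hinner, Clausen.conv ha hb n]
  rfl
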